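/- Let Γ and U be Hermitian PSD m×m matrices. Then log det(I + Γ) ≥ log det(I + U) − Tr(U) + Tr((I + U)·Γ·(I + Γ)⁻¹), with equality if and only if U = Γ. -/

import Mathlib

open Matrix ComplexOrder

lemma ldt_trace_eq {m : ℕ} {M : Matrix (Fin m) (Fin m) ℂ} (hH : M.IsHermitian) :
    M.trace = ((∑ i, hH.eigenvalues i : ℝ) : ℂ) := by
  conv_lhs => rw [hH.spectral_theorem]
  rw [Unitary.conjStarAlgAut_apply, Matrix.trace_mul_cycle]
  rw [(Matrix.mem_unitaryGroup_iff').mp (hH.eigenvectorUnitary).2, one_mul, trace_diagonal]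
  push_cast
  rfl

lemma ldt_key {m : ℕ} {M : Matrix (Fin m) (Fin m) ℂ} (hM : M.PosSemidef) (hdet : M.det ≠ 0) :
    Real.log (M.det.re) ≤ M.trace.re - m ∧ (Real.log (M.det.re) = M.trace.re - m ↔ M = 1) := by
  have hH := hM.1
  set μ := hH.eigenvalues with hμ
  have hdetp : M.det = ((∏ i, μ i : ℝ) : ℂ) := by
    rw [hH.det_eq_prod_eigenvalues]; push_cast; rfl
  have htr : M.trace = ((∑ i, μ i : ℝ) : ℂ) := ldt_trace_eq hH
  have hprodne : (∏ i, μ i) ≠ 0 := by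
    intro h; apply hdet; rw [hdetp, h]; simp
  have hpos : ∀ i, 0 < μ i := by
    intro i
    refine (hM.eigenvalues_nonneg i).lt_of_ne' ?_
    exact Finset.prod_ne_zero_iff.mp hprodne i (Finset.mem_univ i)
  have hlog : Real.log (M.det.re) = ∑ i, Real.log (μ i) := by
    rw [hdetp, Complex.ofReal_re, Real.log_prod (fun i _ => (hpos i).ne')]
  have htrre : M.trace.re = ∑ i, μ i := by rw [htr, Complex.ofReal_re]
  have hsum1 : ∑ i : Fin m, ((μ i) - 1) = (∑ i, μ i) - m := by
    rw [Finset.sum_sub_distrib]; simp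
  constructor
  · rw [hlog, htrre, ← hsum1]
    exact Finset.sum_le_sum (fun i _ => Real.log_le_sub_one_of_pos (hpos i))
  · constructor
    · intro heq
      rw [hlog, htrre, ← hsum1] at heq
      have hall : ∀ i, μ i = 1 := by
        by_contra hc
        push_neg at hc
        obtain ⟨j, hj⟩ := hc
        have hlt : ∑ i, Real.log (μ i) < ∑ i : Fin m, ((μ i) - 1) :=
          Finset.sum_lt_sum (fun i _ => Real.log_le_sub_one_of_pos (hpos i))
            ⟨j, Finset.mem_univ j, Real.log_lt_sub_one_of_pos (hpos j) hj⟩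
        rw [heq] at hlt
        exact lt_irrefl _ hlt
      have hdiag : (RCLike.ofReal ∘ μ : Fin m → ℂ) = fun _ => 1 := by
        funext i; simp [hall i]
      calc M = (hH.eigenvectorUnitary : Matrix (Fin m) (Fin m) ℂ)
            * diagonal (RCLike.ofReal ∘ μ)
            * (star (hH.eigenvectorUnitary : Matrix (Fin m) (Fin m) ℂ)) := hH.spectral_theorem
        _ = 1 := by
            rw [hdiag]
            rw [show Matrix.diagonal (fun _ : Fin m => (1:ℂ)) = 1 from Matrix.diagonal_one]
            rw [mul_one, (Matrix.mem_unitaryGroup_iff).mp (hH.eigenvectorUnitary).2]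
    · rintro rfl
      simp

/-- LDT inequality: for Γ, U Hermitian PSD,
log det(I + Γ) ≥ log det(I + U) − Tr(U) + Tr((I + U)Γ(I + Γ)⁻¹),
with equality iff U = Γ. -/
theorem stmt9 (n : ℕ) (Γ U : Matrix (Fin n) (Fin n) ℂ)
    (hΓ : Γ.PosSemidef) (hU : U.PosSemidef) :
    Real.log ((1 + U).det.re) - U.trace.re + ((1 + U) * Γ * (1 + Γ)⁻¹).trace.re
      ≤ Real.log ((1 + Γ).det.re) ∧
    (Real.log ((1 + U).det.re) - U.trace.re + ((1 + U) * Γ * (1 + Γ)⁻¹).trace.re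
      = Real.log ((1 + Γ).det.re) ↔ U = Γ) := by
  set A : Matrix (Fin n) (Fin n) ℂ := 1 + Γ with hAdef
  set B : Matrix (Fin n) (Fin n) ℂ := 1 + U with hBdef
  have hA : A.PosDef := Matrix.PosDef.add_posSemidef Matrix.PosDef.one hΓ
  have hB : B.PosDef := Matrix.PosDef.add_posSemidef Matrix.PosDef.one hU
  have hAdet0 : A.det ≠ 0 := hA.det_pos.ne'
  have hBdet0 : B.det ≠ 0 := hB.det_pos.ne'
  have hAdet : IsUnit A.det := isUnit_iff_ne_zero.mpr hAdet0
  -- T = sqrt of A⁻¹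
  set T : Matrix (Fin n) (Fin n) ℂ := (open MatrixOrder in CFC.sqrt A⁻¹) with hTdef
  have hT : T.PosSemidef := (open MatrixOrder in (CFC.sqrt_nonneg A⁻¹).posSemidef)
  have hTT : T * T = A⁻¹ := (open MatrixOrder in CFC.sqrt_mul_sqrt_self A⁻¹ hA.inv.posSemidef.nonneg)
  have hTdet0 : T.det ≠ 0 := by
    intro h
    have : (T * T).det = 0 := by rw [Matrix.det_mul, h, mul_zero]
    rw [hTT, Matrix.det_nonsing_inv] at this
    exact hAdet0 (by simpa [Ring.inverse_eq_inv', inv_eq_zero] using this)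
  have hTdet : IsUnit T.det := isUnit_iff_ne_zero.mpr hTdet0
  set M : Matrix (Fin n) (Fin n) ℂ := T * B * T with hMdef
  have hMpsd : M.PosSemidef := by
    have := hB.posSemidef.conjTranspose_mul_mul_same T
    rwa [hT.1.eq] at this
  have hMdet : M.det = A.det⁻¹ * B.det := by
    rw [hMdef, Matrix.det_mul, Matrix.det_mul, mul_comm T.det B.det, mul_assoc,
      ← Matrix.det_mul, hTT, Matrix.det_nonsing_inv, Ring.inverse_eq_inv', mul_comm]
  have hMdet0 : M.det ≠ 0 := by
    rw [hMdet]; exact mul_ne_zero (inv_ne_zero hAdet0) hBdet0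
  -- real positivity of dets
  obtain ⟨haim, hare⟩ : (0:ℂ).im = A.det.im ∧ (0:ℂ).re < A.det.re := by
    have := hA.det_pos; rw [Complex.lt_def] at this; exact ⟨this.2, this.1⟩
  obtain ⟨hbim, hbre⟩ : (0:ℂ).im = B.det.im ∧ (0:ℂ).re < B.det.re := by
    have := hB.det_pos; rw [Complex.lt_def] at this; exact ⟨this.2, this.1⟩
  simp only [Complex.zero_im, Complex.zero_re] at haim hare hbim hbre
  have hAre : A.det = ((A.det.re : ℝ) : ℂ) := Complex.ext rfl (by simp [← haim])
  have hBre : B.det = ((B.det.re : ℝ) : ℂ) := Complex.ext rfl (by simp [← hbim])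
  have hMre : M.det.re = (A.det.re)⁻¹ * B.det.re := by
    rw [hMdet, hAre, hBre, ← Complex.ofReal_inv, ← Complex.ofReal_mul, Complex.ofReal_re]; simp
  have hMlog : Real.log (M.det.re) = Real.log (B.det.re) - Real.log (A.det.re) := by
    rw [hMre, Real.log_mul (inv_ne_zero hare.ne') hbre.ne', Real.log_inv]
    ring
  -- trace M = trace (B * A⁻¹)
  have hMtr : M.trace = (B * A⁻¹).trace := by
    rw [hMdef, Matrix.trace_mul_cycle, hTT, Matrix.trace_mul_comm]
  -- trace of the expression in the goal
  have hΓA : Γ * A⁻¹ = 1 - A⁻¹ := by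
    have : A * A⁻¹ = 1 := Matrix.mul_nonsing_inv A hAdet
    calc Γ * A⁻¹ = (A - 1) * A⁻¹ := by rw [hAdef, add_sub_cancel_left]
      _ = A * A⁻¹ - 1 * A⁻¹ := by rw [Matrix.sub_mul]
      _ = 1 - A⁻¹ := by rw [this, Matrix.one_mul]
  have hexp : B * Γ * A⁻¹ = B - B * A⁻¹ := by
    rw [Matrix.mul_assoc, hΓA, Matrix.mul_sub, Matrix.mul_one]
  have htrexp : (B * Γ * A⁻¹).trace.re = (n : ℝ) + U.trace.re - (B * A⁻¹).trace.re := by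
    rw [hexp, Matrix.trace_sub, hBdef, Matrix.trace_add, Matrix.trace_one]
    simp [Complex.add_re, Complex.sub_re]
  -- the key inequality
  obtain ⟨hineq, hiff⟩ := ldt_key hMpsd hMdet0
  rw [hMlog, hMtr] at hineq hiff
  have hMB : M = 1 ↔ U = Γ := by
    constructor
    · intro h1
      have hBA : B = A := by
        have h2 : T⁻¹ * (T * B * T) * T⁻¹ = T⁻¹ * 1 * T⁻¹ := by rw [← hMdef, h1]
        rw [Matrix.mul_one, ← Matrix.mul_inv_rev, hTT, Matrix.nonsing_inv_nonsing_inv A hAdet] at h2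
        calc B = (T⁻¹ * T) * B * (T * T⁻¹) := by
              rw [Matrix.nonsing_inv_mul T hTdet, Matrix.mul_nonsing_inv T hTdet,
                Matrix.one_mul, Matrix.mul_one]
          _ = T⁻¹ * (T * B * T) * T⁻¹ := by noncomm_ring
          _ = A := h2
      rwa [hAdef, hBdef, add_right_inj] at hBA
    · intro h
      have hBA : B = A := by rw [hAdef, hBdef, h]
      have hAinv : A = T⁻¹ * T⁻¹ := by
        rw [← Matrix.mul_inv_rev, hTT, Matrix.nonsing_inv_nonsing_inv A hAdet]
      rw [hMdef, hBA, hAinv]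
      calc T * (T⁻¹ * T⁻¹) * T = (T * T⁻¹) * (T⁻¹ * T) := by noncomm_ring
        _ = 1 := by rw [Matrix.mul_nonsing_inv T hTdet, Matrix.nonsing_inv_mul T hTdet, one_mul]
  constructor
  · rw [htrexp]; linarith
  · rw [htrexp, ← hMB, ← hiff]; constructor <;> intro h <;> linarith
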